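/- (Lemma 3.2, BV bound for the convolution.) Let η > 0 and let w_η ∈ C²([0,η]) satisfy w_η(η) = w_η'(η) = 0, w_η'(x) ≤ 0 ≤ w_η(x) on [0,η], and ∫_0^η w_η(y) dy = 1. Then for every continuous, nonnegative, integrable function ρ : ℝ → ℝ, the function x ↦ (w_η∗ρ)(x) is differentiable and ∫_ℝ |∂_x(w_η∗ρ)(x)| dx ≤ 2 w_η(0) ‖ρ‖_{L¹(ℝ)}. -/

import Mathlib

open MeasureTheory Convolution

/-- Non-local convolution: `(w∗ρ)(x) = ∫_x^{x+η} ρ(y) w(y−x) dy`. -/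
noncomputable def nlconv (η : ℝ) (w ρ : ℝ → ℝ) (x : ℝ) : ℝ :=
  ∫ y in x..(x + η), ρ y * w (y - x)

/-- Lemma 3.2, BV bound for the convolution. -/
theorem nlconv_BV_bound
    (η : ℝ) (hη : 0 < η)
    -- the kernel w_η ∈ C²([0,η]) with its derivatives w', w''
    (w w' w'' : ℝ → ℝ)
    (hw : ∀ s ∈ Set.Icc (0 : ℝ) η, HasDerivAt w (w' s) s)
    (hw' : ∀ s ∈ Set.Icc (0 : ℝ) η, HasDerivAt w' (w'' s) s)
    (hw'' : ContinuousOn w'' (Set.Icc (0 : ℝ) η))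
    (hwη : w η = 0) (hw'η : w' η = 0)
    (hwsign : ∀ s ∈ Set.Icc (0 : ℝ) η, w' s ≤ 0 ∧ 0 ≤ w s)
    (hwint : ∫ y in (0:ℝ)..η, w y = 1)
    (ρ : ℝ → ℝ) (hρcont : Continuous ρ) (hρnonneg : ∀ x : ℝ, 0 ≤ ρ x)
    (hρint : Integrable ρ) :
    (∀ x : ℝ, DifferentiableAt ℝ (fun z => nlconv η w ρ z) x) ∧
    (∫ x : ℝ, |deriv (fun z => nlconv η w ρ z) x|)
      ≤ 2 * w 0 * ∫ x : ℝ, |ρ x| := by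
  have hη' : (0:ℝ) ≤ η := hη.le
  have hIcc : Set.uIcc (0:ℝ) η = Set.Icc 0 η := Set.uIcc_of_le hη'
  have hIoc : Set.uIoc (0:ℝ) η = Set.Ioc 0 η := Set.uIoc_of_le hη'
  have hwC : ContinuousOn w (Set.Icc 0 η) :=
    fun s hs => ((hw s hs).continuousAt).continuousWithinAt
  have hw'C : ContinuousOn w' (Set.Icc 0 η) :=
    fun s hs => ((hw' s hs).continuousAt).continuousWithinAt
  have hw0 : 0 ≤ w 0 := (hwsign 0 ⟨le_refl 0, hη'⟩).2
  -- antiderivative of ρ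
  set Fa : ℝ → ℝ := fun x => ∫ t in (0:ℝ)..x, ρ t with hFadef
  have hFa : ∀ x : ℝ, HasDerivAt Fa (ρ x) x := by
    intro x
    exact intervalIntegral.integral_hasDerivAt_right (hρcont.intervalIntegrable 0 x)
      (hρcont.stronglyMeasurableAtFilter _ _) hρcont.continuousAt
  have hFaC : Continuous Fa := by
    rw [continuous_iff_continuousAt]; exact fun x => (hFa x).continuousAt
  -- representation via integration by parts
  have hrepr : ∀ x : ℝ, nlconv η w ρ x
      = -(w 0 * Fa x) - ∫ s in (0:ℝ)..η, w' s * Fa (x + s) := by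
    intro x
    have hmem : ∀ y ∈ Set.uIcc x (x + η), y - x ∈ Set.Icc (0:ℝ) η := by
      intro y hy
      rw [Set.uIcc_of_le (by linarith)] at hy
      exact ⟨by linarith [hy.1], by linarith [hy.2]⟩
    have hu : ∀ y ∈ Set.uIcc x (x + η),
        HasDerivAt (fun y => w (y - x)) (w' (y - x)) y := by
      intro y hy
      simpa [Function.comp_def] using (hw _ (hmem y hy)).comp y ((hasDerivAt_id y).sub_const x)
    have hv : ∀ y ∈ Set.uIcc x (x + η), HasDerivAt Fa (ρ y) y := fun y _ => hFa y
    have hu' : IntervalIntegrable (fun y => w' (y - x)) volume x (x + η) := by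
      apply ContinuousOn.intervalIntegrable
      exact hw'C.comp ((continuous_id.sub continuous_const).continuousOn)
        (fun y hy => hmem y hy)
    have hibp := intervalIntegral.integral_mul_deriv_eq_deriv_mul hu hv hu'
      (hρcont.intervalIntegrable x (x + η))
    have h0 : nlconv η w ρ x = ∫ y in x..(x + η), w (y - x) * ρ y := by
      simp only [nlconv, mul_comm]
    have hcv : (∫ s in (0:ℝ)..η, w' s * Fa (x + s))
        = ∫ y in x..(x + η), w' (y - x) * Fa y := by
      have h := intervalIntegral.integral_comp_add_right (a := (0:ℝ)) (b := η)
        (fun y => w' (y - x) * Fa y) x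
      rw [zero_add, add_comm η x] at h
      rw [← h]
      congr 1
      funext s
      simp [add_sub_cancel_right, add_comm]
    rw [h0, hibp, ← hcv]
    simp [hwη, add_sub_cancel_left, sub_self]
  have hfun : (fun z => nlconv η w ρ z)
      = fun z => -(w 0 * Fa z) - ∫ s in (0:ℝ)..η, w' s * Fa (z + s) := funext hrepr
  -- differentiation under the integral sign
  have hG : ∀ x₀ : ℝ, HasDerivAt (fun z => ∫ s in (0:ℝ)..η, w' s * Fa (z + s))
      (∫ s in (0:ℝ)..η, w' s * ρ (x₀ + s)) x₀ := by
    intro x₀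
    obtain ⟨C, hC⟩ := (isCompact_Icc (a := x₀ - 1) (b := x₀ + 1 + η)).exists_bound_of_continuousOn
      hρcont.continuousOn
    have hCnn : 0 ≤ C := le_trans (norm_nonneg _)
      (hC (x₀ - 1) ⟨le_refl _, by linarith⟩)
    have key := intervalIntegral.hasDerivAt_integral_of_dominated_loc_of_deriv_le
      (F := fun x s => w' s * Fa (x + s)) (F' := fun x s => w' s * ρ (x + s))
      (a := (0:ℝ)) (b := η) (μ := volume) (x₀ := x₀) (bound := fun s => |w' s| * C)
      (s := Metric.ball x₀ 1) (Metric.ball_mem_nhds x₀ zero_lt_one) ?_ ?_ ?_ ?_ ?_ ?_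
    · exact key.2
    · refine Filter.Eventually.of_forall fun x => ?_
      rw [hIoc]
      exact ((hw'C.mono Set.Ioc_subset_Icc_self).mul
        ((hFaC.comp (continuous_const.add continuous_id)).continuousOn)).aestronglyMeasurable
        measurableSet_Ioc
    · apply ContinuousOn.intervalIntegrable
      rw [hIcc]
      exact hw'C.mul ((hFaC.comp (continuous_const.add continuous_id)).continuousOn)
    · rw [hIoc]
      exact ((hw'C.mono Set.Ioc_subset_Icc_self).mul
        ((hρcont.comp (continuous_const.add continuous_id)).continuousOn)).aestronglyMeasurable
        measurableSet_Ioc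
    · refine Filter.Eventually.of_forall fun s hs x hx => ?_
      rw [hIoc] at hs
      rw [Metric.mem_ball, Real.dist_eq, abs_sub_lt_iff] at hx
      have hxs : x + s ∈ Set.Icc (x₀ - 1) (x₀ + 1 + η) :=
        ⟨by linarith [hs.1], by linarith [hs.2]⟩
      have := hC (x + s) hxs
      rw [Real.norm_eq_abs] at this ⊢
      rw [abs_mul]
      exact mul_le_mul_of_nonneg_left this (abs_nonneg _)
    · apply ContinuousOn.intervalIntegrable
      rw [hIcc]
      exact hw'C.abs.mul continuousOn_const
    · refine Filter.Eventually.of_forall fun s hs x hx => ?_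
      simpa using ((hFa (x + s)).comp x ((hasDerivAt_id x).add_const s)).const_mul (w' s)
  set D : ℝ → ℝ := fun x => -(w 0 * ρ x) - ∫ s in (0:ℝ)..η, w' s * ρ (x + s) with hDdef
  have hderiv : ∀ x, HasDerivAt (fun z => nlconv η w ρ z) (D x) x := by
    intro x
    rw [hfun]
    exact (((hFa x).const_mul (w 0)).neg).sub (hG x)
  have hdiff : ∀ x, DifferentiableAt ℝ (fun z => nlconv η w ρ z) x :=
    fun x => (hderiv x).differentiableAt
  have hderiv_eq : ∀ x, deriv (fun z => nlconv η w ρ z) x = D x :=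
    fun x => (hderiv x).deriv
  -- the convolution kernel c and its reflection
  set c : ℝ → ℝ := (Set.Ioc (0:ℝ) η).indicator (fun s => -w' s) with hcdef
  have hcint : Integrable c := by
    rw [integrable_indicator_iff measurableSet_Ioc]
    exact (hw'C.neg.integrableOn_Icc).mono_set Set.Ioc_subset_Icc_self
  set cn : ℝ → ℝ := fun v => c (-v) with hcndef
  have hcnint : Integrable cn := hcint.comp_neg
  -- J as a convolution
  have hJconv : ∀ x, (∫ s in (0:ℝ)..η, (-w' s) * ρ (x + s))
      = (ρ ⋆[ContinuousLinearMap.mul ℝ ℝ] cn) x := by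
    intro x
    have h1 : (∫ s in (0:ℝ)..η, (-w' s) * ρ (x + s)) = ∫ s : ℝ, c s * ρ (x + s) := by
      rw [intervalIntegral.integral_of_le hη', ← integral_indicator measurableSet_Ioc]
      congr 1
      funext s
      by_cases hs : s ∈ Set.Ioc (0:ℝ) η
      · simp [hcdef, Set.indicator_of_mem hs]
      · simp [hcdef, Set.indicator_of_notMem hs]
    have h2 : (∫ s : ℝ, c s * ρ (x + s)) = ∫ t : ℝ, c (t - x) * ρ t := by
      rw [← integral_add_right_eq_self (fun t => c (t - x) * ρ t) x]
      congr 1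
      funext s
      simp [add_sub_cancel_right, add_comm]
    rw [h1, h2, convolution_def]
    congr 1
    funext t
    simp [hcndef, ContinuousLinearMap.mul_apply', neg_sub, mul_comm]
  have hJint : Integrable (fun x => ∫ s in (0:ℝ)..η, (-w' s) * ρ (x + s)) := by
    rw [funext hJconv]
    exact hρint.integrable_convolution (L := ContinuousLinearMap.mul ℝ ℝ) hcnint
  -- value of ∫ cn
  have hw'ii : IntervalIntegrable w' volume 0 η := by
    apply ContinuousOn.intervalIntegrable; rw [hIcc]; exact hw'C
  have hftc : ∫ s in (0:ℝ)..η, w' s = w η - w 0 :=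
    intervalIntegral.integral_eq_sub_of_hasDerivAt
      (fun s hs => hw s (hIcc ▸ hs)) hw'ii
  have hcn_val : ∫ v, cn v = w 0 := by
    have h1 : ∫ v, cn v = ∫ v, c v := integral_neg_eq_self c volume
    have h2 : ∫ v, c v = ∫ s in Set.Ioc (0:ℝ) η, -w' s := integral_indicator measurableSet_Ioc
    have h3 : (∫ s in Set.Ioc (0:ℝ) η, -w' s) = ∫ s in (0:ℝ)..η, -w' s :=
      (intervalIntegral.integral_of_le hη').symm
    rw [h1, h2, h3, intervalIntegral.integral_neg, hftc, hwη]
    ring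
  have hJ_total : (∫ x, (∫ s in (0:ℝ)..η, (-w' s) * ρ (x + s))) = (∫ x, ρ x) * w 0 := by
    rw [funext hJconv, integral_convolution (ContinuousLinearMap.mul ℝ ℝ) hρint hcnint, hcn_val,
      ContinuousLinearMap.mul_apply']
  have hJnonneg : ∀ x, 0 ≤ ∫ s in (0:ℝ)..η, (-w' s) * ρ (x + s) := by
    intro x
    apply intervalIntegral.integral_nonneg hη'
    intro s hs
    exact mul_nonneg (neg_nonneg.2 (hwsign s hs).1) (hρnonneg _)
  -- pointwise bound on |D|
  have hbound : ∀ x, |D x| ≤ w 0 * ρ x + ∫ s in (0:ℝ)..η, (-w' s) * ρ (x + s) := by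
    intro x
    have h1 : (∫ s in (0:ℝ)..η, w' s * ρ (x + s))
        = -∫ s in (0:ℝ)..η, (-w' s) * ρ (x + s) := by
      rw [← intervalIntegral.integral_neg]
      congr 1; funext s; ring
    have hDx : D x = -(w 0 * ρ x) + ∫ s in (0:ℝ)..η, (-w' s) * ρ (x + s) := by
      rw [hDdef]; simp only; rw [h1]; ring
    rw [hDx]
    calc |-(w 0 * ρ x) + ∫ s in (0:ℝ)..η, (-w' s) * ρ (x + s)|
        ≤ |-(w 0 * ρ x)| + |∫ s in (0:ℝ)..η, (-w' s) * ρ (x + s)| := abs_add_le _ _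
      _ = w 0 * ρ x + ∫ s in (0:ℝ)..η, (-w' s) * ρ (x + s) := by
          rw [abs_neg, abs_of_nonneg (mul_nonneg hw0 (hρnonneg x)),
            abs_of_nonneg (hJnonneg x)]
  refine ⟨hdiff, ?_⟩
  have habs : (∫ x : ℝ, |ρ x|) = ∫ x, ρ x := by
    congr 1; funext x; exact abs_of_nonneg (hρnonneg x)
  calc (∫ x : ℝ, |deriv (fun z => nlconv η w ρ z) x|) = ∫ x, |D x| := by
        simp only [hderiv_eq]
    _ ≤ ∫ x, (w 0 * ρ x + ∫ s in (0:ℝ)..η, (-w' s) * ρ (x + s)) := by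
        apply integral_mono_of_nonneg
        · exact Filter.Eventually.of_forall fun x => abs_nonneg _
        · exact (hρint.const_mul _).add hJint
        · exact Filter.Eventually.of_forall hbound
    _ = w 0 * (∫ x, ρ x) + (∫ x, ρ x) * w 0 := by
        rw [integral_add (hρint.const_mul _) hJint, integral_const_mul, hJ_total]
    _ = 2 * w 0 * ∫ x : ℝ, |ρ x| := by rw [habs]; ring
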